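/- Every member of the linear system spanned by x^q y - x y^q, y^q z - y z^q, z^q x - z x^q over a field containing F_q defines a singular plane curve; i.e., for every (α,β,γ) ≠ 0 the curve {γ(x^q y - x y^q) + α(y^q z - y z^q) + β(z^q x - z x^q) = 0} is not smooth. -/

import Mathlib

open MvPolynomial

/-- Every member of the linear system spanned by `x^q y - x y^q`, `y^q z - y z^q`,
`z^q x - z x^q` over a field `k` containing `𝔽_q` is a singular plane curve: over the
algebraic closure there is a point where the polynomial and all its partial derivatives
vanish. -/
theorem stmt12 (p e q : ℕ) [Fact p.Prime] (he : e ≠ 0) (hq : q = p ^ e)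
    (k : Type) [Field k] [Algebra (GaloisField p e) k]
    (α β γ : k) (h0 : ¬(α = 0 ∧ β = 0 ∧ γ = 0))
    (F : MvPolynomial (Fin 3) (AlgebraicClosure k))
    (hF : F = C (algebraMap k (AlgebraicClosure k) γ) * (X 0 ^ q * X 1 - X 0 * X 1 ^ q)
            + C (algebraMap k (AlgebraicClosure k) α) * (X 1 ^ q * X 2 - X 1 * X 2 ^ q)
            + C (algebraMap k (AlgebraicClosure k) β) * (X 2 ^ q * X 0 - X 2 * X 0 ^ q)) :
    ∃ v : Fin 3 → AlgebraicClosure k, v ≠ 0 ∧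
      MvPolynomial.eval v F = 0 ∧ ∀ i, MvPolynomial.eval v (pderiv i F) = 0 := by
  set K := AlgebraicClosure k
  haveI : CharP k p := charP_of_injective_algebraMap (algebraMap (GaloisField p e) k).injective p
  haveI : CharP K p := charP_of_injective_algebraMap (algebraMap k K).injective p
  have hqpos : 0 < q := hq ▸ pow_pos (Fact.out (p := p.Prime)).pos e
  have hq0 : (q : K) = 0 := by
    rw [hq]; push_cast
    rw [CharP.cast_eq_zero K p]
    exact zero_pow he
  obtain ⟨a, ha⟩ := IsAlgClosed.exists_pow_nat_eq (algebraMap k K α) hqpos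
  obtain ⟨b, hb⟩ := IsAlgClosed.exists_pow_nat_eq (algebraMap k K β) hqpos
  obtain ⟨c, hc⟩ := IsAlgClosed.exists_pow_nat_eq (algebraMap k K γ) hqpos
  simp only [K] at ha hb hc
  refine ⟨![a, b, c], ?_, ?_, ?_⟩
  · intro hv
    apply h0
    have ha0 : a = 0 := by have := congrFun hv 0; simpa using this
    have hb0 : b = 0 := by have := congrFun hv 1; simpa using this
    have hc0 : c = 0 := by have := congrFun hv 2; simpa using this
    have inj := (algebraMap k K).injective
    refine ⟨inj ?_, inj ?_, inj ?_⟩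
    · rw [← ha, ha0, map_zero, zero_pow hqpos.ne']
    · rw [← hb, hb0, map_zero, zero_pow hqpos.ne']
    · rw [← hc, hc0, map_zero, zero_pow hqpos.ne']
  · simp only [hF, map_add, map_sub, map_mul, map_pow, eval_C, eval_X,
      Matrix.cons_val_zero, Matrix.cons_val_one, Matrix.head_cons, Matrix.cons_val_two,
      Matrix.tail_cons, ← ha, ← hb, ← hc]
    ring
  · intro i
    have hd : ∀ j : Fin 3, eval ![a, b, c] (pderiv i (X j ^ q)) = 0 := by
      intro j
      rw [pderiv_pow]
      simp [hq0]
    fin_cases i <;>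
    · simp only [hF, map_add, map_sub, map_mul, pderiv_C_mul, pderiv_mul, pderiv_X,
        map_add, map_sub, map_mul, eval_C, eval_X, hd]
      simp [Pi.single_apply, ← ha, ← hb, ← hc]
      ring
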